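/- arXiv:0712.4185 — 5 statements merged into one kernel-verified Lean document; each statement's English description precedes it below -/
import Mathlib

section
/- For Boolean Appell polynomials A_n of a unital linear functional μ with moments m_k = μ(x^k), the monomials expand as x^n = Σ_{k=0}^{n} m_k A_{n-k}(x) for all n ≥ 0. -/
open PowerSeries

/-- Moment generating series of a unital linear functional on polynomials. -/
noncomputable def mgf (mu : Polynomial ℂ →ₗ[ℂ] ℂ) : PowerSeries ℂ :=
  PowerSeries.mk fun n => if n = 0 then 0 else mu (Polynomial.X ^ n)

/-- Boolean cumulants, the coefficients of `η = 1 - (1 + M)⁻¹`. -/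
noncomputable def bcum (mu : Polynomial ℂ →ₗ[ℂ] ℂ) (n : ℕ) : ℂ :=
  PowerSeries.coeff n (1 - (1 + mgf mu)⁻¹)

/-- Boolean Appell polynomials `A_n(x) = x^n - Σ_{k=1}^n κ_k x^{n-k}`. -/
noncomputable def appell (mu : Polynomial ℂ →ₗ[ℂ] ℂ) (n : ℕ) : Polynomial ℂ :=
  Polynomial.X ^ n - ∑ k ∈ Finset.Icc 1 n, Polynomial.C (bcum mu k) * Polynomial.X ^ (n - k)

lemma bcum_zero (mu : Polynomial ℂ →ₗ[ℂ] ℂ) : bcum mu 0 = 0 := by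
  simp [bcum, PowerSeries.coeff_zero_eq_constantCoeff, map_sub, map_add,
    PowerSeries.constantCoeff_inv, mgf]

lemma coeff_one_add_mgf (mu : Polynomial ℂ →ₗ[ℂ] ℂ) (hmu : mu 1 = 1) (i : ℕ) :
    (PowerSeries.coeff i) (1 + mgf mu) = mu (Polynomial.X ^ i) := by
  rcases Nat.eq_zero_or_pos i with h | h
  · subst h; simp [mgf, hmu]
  · have : i ≠ 0 := h.ne'
    simp [mgf, PowerSeries.coeff_one, this]

lemma key (mu : Polynomial ℂ →ₗ[ℂ] ℂ) (hmu : mu 1 = 1) (p : ℕ) (hp : 1 ≤ p) :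
    mu (Polynomial.X ^ p) = ∑ j ∈ Finset.Icc 1 p, mu (Polynomial.X ^ (p - j)) * bcum mu j := by
  have hc : PowerSeries.constantCoeff (1 + mgf mu) ≠ 0 := by
    simp [mgf]
  have hmul : (1 + mgf mu) * (1 - (1 + mgf mu)⁻¹) = mgf mu := by
    rw [mul_sub, mul_one, PowerSeries.mul_inv_cancel _ hc]
    ring
  have hcoeff := congrArg (PowerSeries.coeff p) hmul
  rw [PowerSeries.coeff_mul, Finset.Nat.sum_antidiagonal_eq_sum_range_succ_mk] at hcoeff
  have hrhs : (PowerSeries.coeff p) (mgf mu) = mu (Polynomial.X ^ p) := by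
    have hp0 : p ≠ 0 := by omega
    simp [mgf, hp0]
  rw [hrhs] at hcoeff
  rw [← hcoeff]
  simp only [bcum]
  rw [Finset.sum_range_succ]
  have hz : (PowerSeries.coeff (p - p)) (1 - (1 + mgf mu)⁻¹) = 0 := by
    rw [Nat.sub_self]; exact bcum_zero mu
  rw [hz, mul_zero, add_zero]
  refine (Finset.sum_nbij' (fun j => p - j) (fun k => p - k) ?_ ?_ ?_ ?_ ?_).symm
  · intro j hj; simp at hj ⊢; omega
  · intro k hk; simp at hk ⊢; omega
  · intro j hj; simp at hj ⊢; omega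
  · intro k hk; simp at hk ⊢; omega
  · intro j hj
    simp only [Finset.mem_Icc] at hj
    rw [coeff_one_add_mgf mu hmu]
    have : p - (p - j) = j := by omega
    rw [this, mul_comm]

/-- Monomials expand in Boolean Appell polynomials as `x^n = Σ_{k=0}^n m_k A_{n-k}(x)`. -/
theorem stmt_5 (mu : Polynomial ℂ →ₗ[ℂ] ℂ) (hmu : mu 1 = 1) :
    ∀ n : ℕ, (Polynomial.X : Polynomial ℂ) ^ n =
      ∑ k ∈ Finset.range (n + 1), mu (Polynomial.X ^ k) • appell mu (n - k) := by
  intro n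
  have hins : Finset.range (n + 1) = insert 0 (Finset.Icc 1 n) := by
    ext x; simp; omega
  have h0 : (0 : ℕ) ∉ Finset.Icc 1 n := by simp
  simp only [appell, smul_sub, Finset.smul_sum]
  rw [Finset.sum_sub_distrib]
  -- first sum
  have hS1 : ∑ k ∈ Finset.range (n + 1), mu (Polynomial.X ^ k) • (Polynomial.X : Polynomial ℂ) ^ (n - k)
      = Polynomial.X ^ n + ∑ p ∈ Finset.Icc 1 n, mu (Polynomial.X ^ p) • (Polynomial.X : Polynomial ℂ) ^ (n - p) := by
    rw [hins, Finset.sum_insert h0]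
    simp [hmu]
  rw [hS1]
  -- second sum equals the Icc sum
  have hS2 : ∑ k ∈ Finset.range (n + 1), ∑ j ∈ Finset.Icc 1 (n - k),
      mu (Polynomial.X ^ k) • (Polynomial.C (bcum mu j) * Polynomial.X ^ (n - k - j))
      = ∑ p ∈ Finset.Icc 1 n, mu (Polynomial.X ^ p) • (Polynomial.X : Polynomial ℂ) ^ (n - p) := by
    rw [Finset.sum_sigma']
    have hgoal : ∑ p ∈ Finset.Icc 1 n, mu (Polynomial.X ^ p) • (Polynomial.X : Polynomial ℂ) ^ (n - p)
        = ∑ p ∈ Finset.Icc 1 n, ∑ j ∈ Finset.Icc 1 p,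
            (mu (Polynomial.X ^ (p - j)) * bcum mu j) • (Polynomial.X : Polynomial ℂ) ^ (n - p) := by
      refine Finset.sum_congr rfl fun p hp => ?_
      simp only [Finset.mem_Icc] at hp
      rw [← Finset.sum_smul, ← key mu hmu p hp.1]
    rw [hgoal, Finset.sum_sigma']
    refine Finset.sum_nbij' (fun x => ⟨x.1 + x.2, x.2⟩) (fun x => ⟨x.1 - x.2, x.2⟩) ?_ ?_ ?_ ?_ ?_
    · rintro ⟨k, j⟩ h; simp at h ⊢ <;> omega
    · rintro ⟨p, j⟩ h; simp at h ⊢ <;> omega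
    · rintro ⟨k, j⟩ h; simp at h ⊢ <;> omega
    · rintro ⟨p, j⟩ h; simp at h ⊢ <;> omega
    · rintro ⟨k, j⟩ h
      simp only [Finset.mem_sigma, Finset.mem_range, Finset.mem_Icc] at h
      have h1 : k + j - j = k := by omega
      have h2 : n - (k + j) = n - k - j := by omega
      rw [h1, h2, Polynomial.smul_eq_C_mul, Polynomial.smul_eq_C_mul, map_mul]
      ring
  rw [hS2]
  ring
end

section
/- Let R(z), η(z), M(z) be formal power series with zero constant term related by the single-variable free and Boolean cumulant relations: R(z(1 + M(z))) = M(z) and η(z) = M(z)(1 + M(z))^{-1}. Define U(z) = V(z)·(1 + M(V(z))) for a formal power series V with zero constant term and nonzero linear coefficient. Then, as formal power series identities, (1 - x·U(z) + R(U(z)))^{-1} = (1 - x·V(z))^{-1} · (1 - η(V(z))), where x is a commuting indeterminate and inverses are taken in C[x][[z]]. -/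
open PowerSeries

/-- Formal composition `F(V)` of power series, valid when `V` has zero constant term. -/
noncomputable def pcomp {R : Type*} [CommRing R] (F V : PowerSeries R) : PowerSeries R :=
  PowerSeries.mk fun n =>
    ∑ k ∈ Finset.range (n + 1), PowerSeries.coeff k F * PowerSeries.coeff n (V ^ k)

/-- Lift a complex power series to a power series with polynomial coefficients. -/
noncomputable def plift : PowerSeries ℂ →+* PowerSeries (Polynomial ℂ) :=
  PowerSeries.map (Polynomial.C : ℂ →+* Polynomial ℂ)

section PcompLemmas

open Finset

variable {A : Type*} [CommRing A]

lemma coeff_pow_zero {V : PowerSeries A} (hV : constantCoeff V = 0) {n k : ℕ}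
    (h : n < k) : coeff n (V ^ k) = 0 := by
  have hd : (X : PowerSeries A) ^ k ∣ V ^ k :=
    pow_dvd_pow_of_dvd (X_dvd_iff.mpr hV) k
  exact (X_pow_dvd_iff.mp hd) n h

lemma coeff_pcomp (F V : PowerSeries A) (n : ℕ) :
    coeff n (pcomp F V) = ∑ k ∈ range (n + 1), coeff k F * coeff n (V ^ k) := by
  simp [pcomp]

lemma coeff_pcomp_ext {V : PowerSeries A} (hV : constantCoeff V = 0)
    (F : PowerSeries A) {n N : ℕ} (h : n ≤ N) :
    coeff n (pcomp F V) = ∑ k ∈ range (N + 1), coeff k F * coeff n (V ^ k) := by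
  rw [coeff_pcomp]
  apply Finset.sum_subset
  · exact Finset.range_subset_range.mpr (by omega)
  · intro k hk hnk
    simp only [Finset.mem_range] at hk hnk
    rw [coeff_pow_zero hV (by omega), mul_zero]

lemma pcomp_add (F G V : PowerSeries A) :
    pcomp (F + G) V = pcomp F V + pcomp G V := by
  ext n
  simp [coeff_pcomp, add_mul, Finset.sum_add_distrib]

lemma pcomp_one (V : PowerSeries A) : pcomp (1 : PowerSeries A) V = 1 := by
  ext n
  rw [coeff_pcomp, Finset.sum_eq_single 0]
  · simp
  · intro k _ hk
    simp [PowerSeries.coeff_one, hk]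
  · simp

lemma pcomp_X {V : PowerSeries A} (hV : constantCoeff V = 0) :
    pcomp (X : PowerSeries A) V = V := by
  ext n
  rw [coeff_pcomp, Finset.sum_eq_single 1]
  · simp
  · intro k _ hk
    simp [PowerSeries.coeff_X, hk]
  · intro h
    simp only [Finset.mem_range, not_lt] at h
    have hn : n = 0 := by omega
    subst hn
    simp [hV, ← coeff_zero_eq_constantCoeff_apply]

lemma sum_antidiag_square (n : ℕ) (f : ℕ → ℕ → A)
    (hf : ∀ i j, n < i + j → f i j = 0) :
    ∑ k ∈ range (n + 1), ∑ p ∈ antidiagonal k, f p.1 p.2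
      = ∑ p ∈ range (n + 1) ×ˢ range (n + 1), f p.1 p.2 := by
  rw [← Finset.sum_biUnion]
  · apply Finset.sum_subset
    · intro p hp
      simp only [Finset.mem_biUnion, Finset.mem_range, Finset.HasAntidiagonal.mem_antidiagonal] at hp
      obtain ⟨k, hk, hpk⟩ := hp
      simp only [Finset.mem_product, Finset.mem_range]
      omega
    · intro p hp hnp
      apply hf
      by_contra h
      push_neg at h
      exact hnp (Finset.mem_biUnion.mpr ⟨p.1 + p.2, Finset.mem_range.mpr (by omega),
        Finset.HasAntidiagonal.mem_antidiagonal.mpr rfl⟩)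
  · intro k hk l hl hkl
    simp only [Finset.disjoint_left]
    intro p hp hp'
    simp only [Finset.HasAntidiagonal.mem_antidiagonal] at hp hp'
    exact hkl (hp ▸ hp')

lemma pcomp_mul {V : PowerSeries A} (hV : constantCoeff V = 0)
    (F G : PowerSeries A) :
    pcomp (F * G) V = pcomp F V * pcomp G V := by
  ext n
  have hzero : ∀ i j : ℕ, n < i + j →
      coeff i F * coeff j G * coeff n (V ^ (i + j)) = 0 := fun i j h => by
    rw [coeff_pow_zero hV h, mul_zero]
  have hL : coeff n (pcomp (F * G) V)
      = ∑ p ∈ range (n + 1) ×ˢ range (n + 1),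
          coeff p.1 F * coeff p.2 G * coeff n (V ^ (p.1 + p.2)) := by
    rw [coeff_pcomp, ← sum_antidiag_square n _ hzero]
    apply Finset.sum_congr rfl
    intro k _
    rw [PowerSeries.coeff_mul, Finset.sum_mul]
    apply Finset.sum_congr rfl
    intro p hp
    rw [Finset.HasAntidiagonal.mem_antidiagonal] at hp
    rw [hp]
  have hR : coeff n (pcomp F V * pcomp G V)
      = ∑ p ∈ range (n + 1) ×ˢ range (n + 1),
          coeff p.1 F * coeff p.2 G * coeff n (V ^ (p.1 + p.2)) := by
    rw [PowerSeries.coeff_mul]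
    have step : ∀ q ∈ antidiagonal n,
        coeff q.1 (pcomp F V) * coeff q.2 (pcomp G V)
          = ∑ p ∈ range (n + 1) ×ˢ range (n + 1),
              coeff p.1 F * coeff p.2 G *
                (coeff q.1 (V ^ p.1) * coeff q.2 (V ^ p.2)) := by
      intro q hq
      rw [Finset.HasAntidiagonal.mem_antidiagonal] at hq
      rw [coeff_pcomp_ext hV F (show q.1 ≤ n by omega),
        coeff_pcomp_ext hV G (show q.2 ≤ n by omega), Finset.sum_mul_sum,
        ← Finset.sum_product']
      apply Finset.sum_congr rfl
      intro p _
      ring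
    rw [Finset.sum_congr rfl step, Finset.sum_comm]
    apply Finset.sum_congr rfl
    intro p _
    rw [← Finset.mul_sum, pow_add, PowerSeries.coeff_mul]
  rw [hL, hR]

lemma pcomp_pow {V : PowerSeries A} (hV : constantCoeff V = 0)
    (F : PowerSeries A) (j : ℕ) :
    pcomp (F ^ j) V = (pcomp F V) ^ j := by
  induction j with
  | zero => simpa using pcomp_one V
  | succ j ih => rw [pow_succ, pow_succ, pcomp_mul hV, ih]

lemma constantCoeff_pcomp (F V : PowerSeries A) :
    constantCoeff (pcomp F V) = constantCoeff F := by
  rw [← coeff_zero_eq_constantCoeff_apply, coeff_pcomp]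
  simp

lemma pcomp_assoc {V W : PowerSeries A} (hV : constantCoeff V = 0)
    (hW : constantCoeff W = 0) (F : PowerSeries A) :
    pcomp (pcomp F W) V = pcomp F (pcomp W V) := by
  ext n
  rw [coeff_pcomp, coeff_pcomp]
  have step : ∀ k ∈ range (n + 1),
      coeff k (pcomp F W) * coeff n (V ^ k)
        = ∑ j ∈ range (n + 1), coeff j F * (coeff k (W ^ j) * coeff n (V ^ k)) := by
    intro k hk
    rw [Finset.mem_range] at hk
    rw [coeff_pcomp_ext hW F (show k ≤ n by omega), Finset.sum_mul]
    apply Finset.sum_congr rfl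
    intro j _
    ring
  rw [Finset.sum_congr rfl step, Finset.sum_comm]
  apply Finset.sum_congr rfl
  intro j _
  rw [← Finset.mul_sum, ← pcomp_pow hV, ← coeff_pcomp]

end PcompLemmas

/-- Free/Boolean change of variables: if `R(z(1+M)) = M`, `η = M (1+M)⁻¹`, and
`U = V (1 + M(V))`, then `(1 - x U + R(U))⁻¹ = (1 - x V)⁻¹ (1 - η(V))`. -/
theorem stmt_8 (M R η V U : PowerSeries ℂ)
    (hM0 : PowerSeries.constantCoeff M = 0)
    (hR0 : PowerSeries.constantCoeff R = 0)
    (hη0 : PowerSeries.constantCoeff η = 0)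
    (hV0 : PowerSeries.constantCoeff V = 0)
    (hV1 : PowerSeries.coeff 1 V ≠ 0)
    (hR : pcomp R (PowerSeries.X * (1 + M)) = M)
    (hη : η * (1 + M) = M)
    (hU : U = V * (1 + pcomp M V)) :
    PowerSeries.invOfUnit
        (1 - PowerSeries.C (R := Polynomial ℂ) Polynomial.X * plift U + plift (pcomp R U)) 1 =
      PowerSeries.invOfUnit
          (1 - PowerSeries.C (R := Polynomial ℂ) Polynomial.X * plift V) 1 *
        (1 - plift (pcomp η V)) := by
  have hW0 : PowerSeries.constantCoeff (PowerSeries.X * (1 + M)) = 0 := by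
    simp
  -- composition of hR with V gives `R(U) = M(V)`
  have hXc : pcomp (PowerSeries.X * (1 + M)) V = U := by
    rw [pcomp_mul hV0, pcomp_X hV0, pcomp_add, pcomp_one, hU]
  have h1 : pcomp R U = pcomp M V := by
    have ha := pcomp_assoc hV0 hW0 R
    rw [hR, hXc] at ha
    exact ha.symm
  -- composition of hη with V
  have h2 : pcomp η V * (1 + pcomp M V) = pcomp M V := by
    have h := congrArg (fun F => pcomp F V) hη
    simpa [pcomp_mul hV0, pcomp_add, pcomp_one] using h
  have h3 : (1 + pcomp M V) * (1 - pcomp η V) = 1 := by linear_combination -h2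
  -- lift everything
  set x : PowerSeries (Polynomial ℂ) := PowerSeries.C (R := Polynomial ℂ) Polynomial.X with hx
  have hU' : plift U = plift V * (1 + plift (pcomp M V)) := by
    rw [hU, map_mul, map_add, map_one]
  have h3' : (1 + plift (pcomp M V)) * (1 - plift (pcomp η V)) = 1 := by
    have h := congrArg plift h3
    simpa [map_mul, map_add, map_sub, map_one] using h
  set A : PowerSeries (Polynomial ℂ) :=
    1 - x * plift U + plift (pcomp R U) with hA
  set B : PowerSeries (Polynomial ℂ) := 1 - x * plift V with hB
  set e : PowerSeries (Polynomial ℂ) := plift (pcomp η V) with he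
  have key : A * (1 - e) = B := by
    rw [hA, hB, he, h1]
    linear_combination (1 - x * plift V) * h3' -
      x * (1 - plift (pcomp η V)) * hU'
  -- constant coefficients
  have hcplift : ∀ W : PowerSeries ℂ,
      PowerSeries.constantCoeff (plift W)
        = Polynomial.C (PowerSeries.constantCoeff W) := by
    intro W
    rw [← PowerSeries.coeff_zero_eq_constantCoeff_apply, plift, PowerSeries.coeff_map,
      PowerSeries.coeff_zero_eq_constantCoeff_apply]
  have hU0 : PowerSeries.constantCoeff U = 0 := by
    rw [hU, map_mul, hV0, zero_mul]
  have hRU0 : PowerSeries.constantCoeff (pcomp R U) = 0 := by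
    rw [constantCoeff_pcomp, hR0]
  have hA1 : PowerSeries.constantCoeff A = ((1 : (Polynomial ℂ)ˣ) : Polynomial ℂ) := by
    rw [hA]
    simp [hcplift, hU0, hRU0]
  have hB1 : PowerSeries.constantCoeff B = ((1 : (Polynomial ℂ)ˣ) : Polynomial ℂ) := by
    rw [hB]
    simp [hcplift, hV0]
  have hAinv : A * PowerSeries.invOfUnit A 1 = 1 := PowerSeries.mul_invOfUnit A 1 hA1
  have hBinv : B * PowerSeries.invOfUnit B 1 = 1 := PowerSeries.mul_invOfUnit B 1 hB1
  calc PowerSeries.invOfUnit A 1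
      = PowerSeries.invOfUnit A 1 * (B * PowerSeries.invOfUnit B 1) := by
        rw [hBinv, mul_one]
    _ = PowerSeries.invOfUnit B 1 * ((A * PowerSeries.invOfUnit A 1) * (1 - e)) := by
        rw [← key]; ring
    _ = PowerSeries.invOfUnit B 1 * (1 - e) := by rw [hAinv, one_mul]
end

section
/- Suppose S is a centered real random variable (or a unital linear functional on C[x] with mean zero and variance 1) whose moments satisfy φ(S^{n+2}) = φ(S^n) + a·φ(S^{n+1}) for all n ≥ 0, with φ(S) = 0. Then the moment generating series satisfies M(z) = z²/(1 - a z - z²), and hence the distribution of S is the Bernoulli distribution (1/(1+β²)) δ_β + (β²/(1+β²)) δ_{-1/β} where β - 1/β = a. -/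
open PowerSeries

/-- If the moments of a centered variable satisfy `m_{n+2} = m_n + a m_{n+1}` (with
`m_0 = 1`, `m_1 = 0`), then `M(z)(1 - az - z²) = z²`, and the moments are those of the
Bernoulli distribution `(1/(1+β²)) δ_β + (β²/(1+β²)) δ_{-1/β}` whenever `β - 1/β = a`. -/
theorem stmt_10 (a : ℝ) (m : ℕ → ℝ) (h0 : m 0 = 1) (h1 : m 1 = 0)
    (hrec : ∀ n : ℕ, m (n + 2) = m n + a * m (n + 1))
    (M : PowerSeries ℝ) (hM : M = PowerSeries.mk fun n => if n = 0 then 0 else m n) :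
    M * (1 - PowerSeries.C a * PowerSeries.X - PowerSeries.X ^ 2) = PowerSeries.X ^ 2 ∧
    ∀ β : ℝ, β ≠ 0 → β - 1 / β = a →
      ∀ n : ℕ, m n = (β ^ n + β ^ 2 * (-1 / β) ^ n) / (1 + β ^ 2) := by
  constructor
  · have hexp : M * (1 - PowerSeries.C a * PowerSeries.X - PowerSeries.X ^ 2)
        = M - PowerSeries.C a * (M * PowerSeries.X) - M * PowerSeries.X ^ 2 := by ring
    rw [hexp, hM]
    ext n
    match n with
    | 0 => simp
    | 1 => simp [h1, PowerSeries.coeff_mul_X_pow', PowerSeries.coeff_X_pow]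
    | (n + 2) =>
      simp only [map_sub, PowerSeries.coeff_C_mul, PowerSeries.coeff_succ_mul_X,
        PowerSeries.coeff_mul_X_pow, PowerSeries.coeff_mk, PowerSeries.coeff_X_pow]
      match n with
      | 0 => simp [hrec 0, h0, h1]
      | (k + 1) =>
        have h : k + 1 + 2 ≠ 2 := by omega
        simp only [if_neg h, Nat.add_eq_zero, and_false, if_false, Nat.succ_ne_zero,
          OfNat.ofNat_ne_zero]
        rw [hrec (k + 1)]
        ring
  · intro β hβ hβa n
    have hβ2 : β ^ 2 = 1 + a * β := by
      rw [← hβa]; field_simp; ring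
    have hγ2 : (-1 / β) ^ 2 = 1 + a * (-1 / β) := by
      rw [← hβa]; field_simp; ring
    have hpos : (1 : ℝ) + β ^ 2 ≠ 0 := by positivity
    have key : ∀ n : ℕ, m n = (β ^ n + β ^ 2 * (-1 / β) ^ n) / (1 + β ^ 2) ∧
        m (n + 1) = (β ^ (n + 1) + β ^ 2 * (-1 / β) ^ (n + 1)) / (1 + β ^ 2) := by
      intro n
      induction n with
      | zero =>
        constructor
        · simp [h0]; field_simp
        · simp [h1]; field_simp; ring
      | succ k ih =>
        refine ⟨ih.2, ?_⟩
        rw [hrec k, ih.1, ih.2]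
        have e1 : β ^ (k + 2) = β ^ k + a * β ^ (k + 1) := by
          have : β ^ (k + 2) = β ^ k * β ^ 2 := by ring
          rw [this, hβ2]; ring
        have e2 : (-1 / β) ^ (k + 2) = (-1 / β) ^ k + a * (-1 / β) ^ (k + 1) := by
          have : (-1 / β) ^ (k + 2) = (-1 / β) ^ k * (-1 / β) ^ 2 := by ring
          rw [this, hγ2]; ring
        rw [e1, e2]
        field_simp
        ring
    exact (key n).1
end

section
/- Let φ be a linear functional on C[x] whose monic orthogonal polynomials P_n satisfy x P_n = P_{n+1} + β_n P_n + γ_n P_{n-1} (Jacobi parameters β_n, γ_n). For t > 0, let φ^{⊎t} be the Boolean convolution power, defined by η_{φ^{⊎t}}(z) = t·η_φ(z). Then the Jacobi parameters of φ^{⊎t} are (t β_0, β_1, β_2, ...) and (t γ_1, γ_2, γ_3, ...), i.e., only β_0 and γ_1 are multiplied by t while all other Jacobi parameters are unchanged. -/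
open PowerSeries

/-- Boolean convolution powers and Jacobi parameters. If the moment generating function of
`φ` has the continued fraction expansion with Jacobi parameters `β k` and `g k` (where
`g k = γ_{k+1}`), witnessed by the sequence of tails `F k` satisfying
`F k (1 - β_k z - g_k z² F (k+1)) = 1` with `1 + M_φ = F 0`, then the Boolean power
`φ^{⊎t}`, whose moment generating function is `(1 - t η_φ)⁻¹` with
`η_φ = 1 - (F 0)⁻¹`, has Jacobi parameters `(t β₀, β₁, β₂, …)` and `(t γ₁, γ₂, γ₃, …)`. -/
theorem stmt_11 (β g : ℕ → ℂ) (F : ℕ → PowerSeries ℂ)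
    (hF : ∀ k, F k * (1 - PowerSeries.C (β k) * PowerSeries.X
        - PowerSeries.C (g k) * PowerSeries.X ^ 2 * F (k + 1)) = 1)
    (t : ℝ) (ht : 0 < t) :
    ∃ F' : ℕ → PowerSeries ℂ,
      (∀ k, F' k * (1 - PowerSeries.C (if k = 0 then (t : ℂ) * β 0 else β k) * PowerSeries.X
          - PowerSeries.C (if k = 0 then (t : ℂ) * g 0 else g k) * PowerSeries.X ^ 2
            * F' (k + 1)) = 1) ∧
      F' 0 = (1 - (t : ℂ) • (1 - (F 0)⁻¹))⁻¹ := by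
  -- F 0 is invertible with inverse A := 1 - β₀ X - g₀ X² F 1
  set A : PowerSeries ℂ := 1 - PowerSeries.C (β 0) * PowerSeries.X
      - PowerSeries.C (g 0) * PowerSeries.X ^ 2 * F 1 with hA
  have hF0 : F 0 * A = 1 := hF 0
  have hcc : constantCoeff (F 0) * constantCoeff A = 1 := by
    rw [← map_mul, hF0, map_one]
  have hF0c : constantCoeff (F 0) ≠ 0 := left_ne_zero_of_mul_eq_one hcc
  have hF0inv : (F 0)⁻¹ = A := by
    rw [PowerSeries.inv_eq_iff_mul_eq_one hF0c, mul_comm]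
    exact hF0
  have hB : (1 : PowerSeries ℂ) - (t : ℂ) • (1 - (F 0)⁻¹)
      = 1 - PowerSeries.C ((t : ℂ) * β 0) * PowerSeries.X
        - PowerSeries.C ((t : ℂ) * g 0) * PowerSeries.X ^ 2 * F 1 := by
    rw [hF0inv, hA, PowerSeries.smul_eq_C_mul, map_mul, map_mul]
    ring
  have hBc : constantCoeff (1 - (t : ℂ) • (1 - (F 0)⁻¹)) ≠ 0 := by
    rw [hB]
    simp [constantCoeff_X]
  refine ⟨fun k => Nat.casesOn k (1 - (t : ℂ) • (1 - (F 0)⁻¹))⁻¹ (fun n => F (n + 1)), ?_, rfl⟩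
  intro k
  cases k with
  | zero =>
    show (1 - (t : ℂ) • (1 - (F 0)⁻¹))⁻¹ *
        (1 - PowerSeries.C (if 0 = 0 then (t : ℂ) * β 0 else β 0) * PowerSeries.X
          - PowerSeries.C (if 0 = 0 then (t : ℂ) * g 0 else g 0) * PowerSeries.X ^ 2 * F 1) = 1
    rw [if_pos rfl, if_pos rfl, ← hB, PowerSeries.inv_mul_cancel _ hBc]
  | succ n =>
    show F (n + 1) * (1 - PowerSeries.C (if n + 1 = 0 then (t : ℂ) * β 0 else β (n + 1))
        * PowerSeries.X - PowerSeries.C (if n + 1 = 0 then (t : ℂ) * g 0 else g (n + 1))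
        * PowerSeries.X ^ 2 * F (n + 2)) = 1
    rw [if_neg (Nat.succ_ne_zero n), if_neg (Nat.succ_ne_zero n)]
    exact hF (n + 1)
end

section
/- If F(z) is a formal power series with constant term 1 satisfying F(z) = 1/(1 - b z - c z² F(z)) (continued fraction fixed point), and G(z) = 1/(1 - b₀ z - c₁ z² F(z)), then G is the moment generating function 1 + M(z) of a functional whose monic orthogonal polynomials satisfy x P_0 = P_1 + b₀, x P_n = P_{n+1} + b P_n + (c₁ if n=1 else c) P_{n-1} for n ≥ 1; i.e., periodic continued fractions after level one correspond to constant Jacobi parameters after level one. -/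
open PowerSeries

noncomputable def phiAux (g : ℕ → ℂ) : Polynomial ℂ →ₗ[ℂ] ℂ where
  toFun p := p.sum fun k a => a * g k
  map_add' p q := Polynomial.sum_add_index p q _ (fun i => zero_mul _) (fun i a b => add_mul a b _)
  map_smul' r p := by
    simp only [RingHom.id_apply]
    rw [Polynomial.sum_smul_index p r (fun k a => a * g k) (fun i => zero_mul _)]
    rw [Polynomial.sum, Polynomial.sum, smul_eq_mul, Finset.mul_sum]
    simp [mul_assoc]

theorem phiAux_monomial (g : ℕ → ℂ) (k : ℕ) (a : ℂ) :
    phiAux g (Polynomial.monomial k a) = a * g k := by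
  simp [phiAux, Polynomial.sum_monomial_index]

noncomputable def Aser (c c₁ : ℂ) (F G : PowerSeries ℂ) : ℕ → PowerSeries ℂ
  | 0 => G
  | n+1 => PowerSeries.C c₁ * PowerSeries.X * F * (PowerSeries.C c * PowerSeries.X * F)^n * G

noncomputable def Ppoly (b c b₀ c₁ : ℂ) : ℕ → Polynomial ℂ
  | 0 => 1
  | 1 => Polynomial.X - Polynomial.C b₀
  | 2 => Polynomial.X * (Polynomial.X - Polynomial.C b₀)
      - Polynomial.C b * (Polynomial.X - Polynomial.C b₀) - Polynomial.C c₁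
  | n+3 => Polynomial.X * Ppoly b c b₀ c₁ (n+2) - Polynomial.C b * Ppoly b c b₀ c₁ (n+2)
      - Polynomial.C c * Ppoly b c b₀ c₁ (n+1)

/-- Periodic continued fractions after level one correspond to constant Jacobi parameters
after level one: if `F = (1 - bz - cz²F)⁻¹` and `G = (1 - b₀z - c₁z²F)⁻¹`, then `G` is the
moment generating function `1 + M` of a unital functional `φ` with `φ(P_n) = δ_{n,0}`,
whose monic polynomials satisfy `xP₀ = P₁ + b₀`, `xP₁ = P₂ + bP₁ + c₁P₀`, and
`xP_n = P_{n+1} + bP_n + cP_{n-1}` for `n ≥ 2`. -/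
theorem stmt_13 (b c b₀ c₁ : ℂ) (F G : PowerSeries ℂ)
    (hF1 : PowerSeries.constantCoeff F = 1)
    (hF : F * (1 - PowerSeries.C b * PowerSeries.X
        - PowerSeries.C c * PowerSeries.X ^ 2 * F) = 1)
    (hG : G * (1 - PowerSeries.C b₀ * PowerSeries.X
        - PowerSeries.C c₁ * PowerSeries.X ^ 2 * F) = 1) :
    ∃ (P : ℕ → Polynomial ℂ) (φ : Polynomial ℂ →ₗ[ℂ] ℂ),
      P 0 = 1 ∧
      Polynomial.X * P 0 = P 1 + Polynomial.C b₀ ∧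
      Polynomial.X * P 1 = P 2 + Polynomial.C b * P 1 + Polynomial.C c₁ * P 0 ∧
      (∀ n : ℕ, Polynomial.X * P (n + 2)
          = P (n + 3) + Polynomial.C b * P (n + 2) + Polynomial.C c * P (n + 1)) ∧
      φ (P 0) = 1 ∧ (∀ n : ℕ, φ (P (n + 1)) = 0) ∧
      (∀ n : ℕ, PowerSeries.coeff n G = φ (Polynomial.X ^ n)) := by
  set g : ℕ → ℂ := fun n => PowerSeries.coeff n G with hg
  set φ : Polynomial ℂ →ₗ[ℂ] ℂ := phiAux g with hφ
  set P : ℕ → Polynomial ℂ := Ppoly b c b₀ c₁ with hP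
  set A : ℕ → PowerSeries ℂ := Aser c c₁ F G with hA
  have hg0 : g 0 = 1 := by
    have := congrArg (PowerSeries.constantCoeff) hG
    simpa [hg, PowerSeries.coeff_zero_eq_constantCoeff] using this
  have φX : ∀ k : ℕ, φ (Polynomial.X ^ k) = g k := by
    intro k
    have : (Polynomial.X ^ k : Polynomial ℂ) = Polynomial.monomial k 1 := by
      simp [Polynomial.monomial_one_right_eq_X_pow]
    rw [this, hφ, phiAux_monomial, one_mul]
  -- key power series identities
  have L1 : PowerSeries.X * A 1 + PowerSeries.C b₀ * PowerSeries.X * A 0 = A 0 - 1 := by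
    show PowerSeries.X * (PowerSeries.C c₁ * PowerSeries.X * F *
      (PowerSeries.C c * PowerSeries.X * F)^0 * G) + PowerSeries.C b₀ * PowerSeries.X * G
      = G - 1
    linear_combination -hG
  have L2 : PowerSeries.X * A 2 + PowerSeries.C b * PowerSeries.X * A 1
      + PowerSeries.C c₁ * PowerSeries.X * A 0 = A 1 := by
    show PowerSeries.X * (PowerSeries.C c₁ * PowerSeries.X * F *
        (PowerSeries.C c * PowerSeries.X * F)^1 * G)
      + PowerSeries.C b * PowerSeries.X * (PowerSeries.C c₁ * PowerSeries.X * F *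
        (PowerSeries.C c * PowerSeries.X * F)^0 * G)
      + PowerSeries.C c₁ * PowerSeries.X * G
      = PowerSeries.C c₁ * PowerSeries.X * F * (PowerSeries.C c * PowerSeries.X * F)^0 * G
    linear_combination (-(PowerSeries.C c₁) * PowerSeries.X * G) * hF
  have L3 : ∀ m : ℕ, PowerSeries.X * A (m+3) + PowerSeries.C b * PowerSeries.X * A (m+2)
      + PowerSeries.C c * PowerSeries.X * A (m+1) = A (m+2) := by
    intro m
    show PowerSeries.X * (PowerSeries.C c₁ * PowerSeries.X * F *
        (PowerSeries.C c * PowerSeries.X * F)^(m+2) * G)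
      + PowerSeries.C b * PowerSeries.X * (PowerSeries.C c₁ * PowerSeries.X * F *
        (PowerSeries.C c * PowerSeries.X * F)^(m+1) * G)
      + PowerSeries.C c * PowerSeries.X * (PowerSeries.C c₁ * PowerSeries.X * F *
        (PowerSeries.C c * PowerSeries.X * F)^m * G)
      = PowerSeries.C c₁ * PowerSeries.X * F * (PowerSeries.C c * PowerSeries.X * F)^(m+1) * G
    linear_combination (-(PowerSeries.C c₁) * PowerSeries.C c * PowerSeries.X^2 * F * G *
      (PowerSeries.C c * PowerSeries.X * F)^m) * hF
  -- coefficient-level consequences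
  have coeffL : ∀ (B B' B'' : PowerSeries ℂ) (β γ : ℂ),
      PowerSeries.X * B'' + PowerSeries.C β * PowerSeries.X * B'
        + PowerSeries.C γ * PowerSeries.X * B = B' →
      ∀ k : ℕ, PowerSeries.coeff k B'' =
        PowerSeries.coeff (k+1) B' - β * PowerSeries.coeff k B'
          - γ * PowerSeries.coeff k B := by
    intro B B' B'' β γ h k
    have h2 := congrArg (PowerSeries.coeff (k+1)) h
    simp only [map_add, mul_assoc, PowerSeries.coeff_succ_X_mul,
      PowerSeries.coeff_C_mul] at h2
    linear_combination h2

  have key : ∀ n : ℕ,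
      (∀ k : ℕ, φ (Polynomial.X ^ k * P n) = PowerSeries.coeff k (A n)) ∧
      (∀ k : ℕ, φ (Polynomial.X ^ k * P (n+1)) = PowerSeries.coeff k (A (n+1))) := by
    intro n
    induction n with
    | zero =>
      constructor
      · intro k
        have : Polynomial.X ^ k * P 0 = Polynomial.X ^ k := by simp [hP, Ppoly]
        rw [this, φX]
        rfl
      · intro k
        have hrec : Polynomial.X ^ k * P 1
            = Polynomial.X ^ (k+1) * P 0 - b₀ • (Polynomial.X ^ k * P 0) := by
          simp only [hP, Ppoly, Polynomial.smul_eq_C_mul]; ring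
        rw [hrec, map_sub, map_smul]
        have e0 : ∀ j, Polynomial.X ^ j * P 0 = Polynomial.X ^ j := by
          intro j; simp [hP, Ppoly]
        rw [e0, e0, φX, φX]
        have h1 := congrArg (PowerSeries.coeff (k+1)) L1
        simp only [map_add, map_sub, mul_assoc, PowerSeries.coeff_succ_X_mul,
          PowerSeries.coeff_C_mul, PowerSeries.coeff_one, Nat.succ_ne_zero, if_false] at h1
        have hA0 : A 0 = G := rfl
        rw [hA0] at h1
        simp only [smul_eq_mul, hg]
        linear_combination -h1
    | succ m ih =>
      obtain ⟨ih1, ih2⟩ := ih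
      refine ⟨ih2, ?_⟩
      intro k
      cases m with
      | zero =>
        have hrec : Polynomial.X ^ k * P 2
            = Polynomial.X ^ (k+1) * P 1 - b • (Polynomial.X ^ k * P 1)
              - c₁ • (Polynomial.X ^ k * P 0) := by
          simp only [hP, Ppoly, Polynomial.smul_eq_C_mul]; ring
        rw [hrec, map_sub, map_sub, map_smul, map_smul, ih2, ih2, ih1]
        have := coeffL (A 0) (A 1) (A 2) b c₁ L2 k
        simp only [smul_eq_mul]
        linear_combination -this
      | succ m' =>
        have hrec : Polynomial.X ^ k * P (m' + 3)
            = Polynomial.X ^ (k+1) * P (m' + 2) - b • (Polynomial.X ^ k * P (m' + 2))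
              - c • (Polynomial.X ^ k * P (m' + 1)) := by
          simp only [hP, Ppoly, Polynomial.smul_eq_C_mul]; ring
        rw [hrec, map_sub, map_sub, map_smul, map_smul, ih2, ih2, ih1]
        have := coeffL (A (m'+1)) (A (m'+2)) (A (m'+3)) b c (L3 m') k
        simp only [smul_eq_mul]
        linear_combination -this
  refine ⟨P, φ, ?_, ?_, ?_, ?_, ?_, ?_, ?_⟩
  · rfl
  · show Polynomial.X * Ppoly b c b₀ c₁ 0 = Ppoly b c b₀ c₁ 1 + Polynomial.C b₀
    simp [Ppoly]
  · show Polynomial.X * Ppoly b c b₀ c₁ 1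
      = Ppoly b c b₀ c₁ 2 + Polynomial.C b * Ppoly b c b₀ c₁ 1
        + Polynomial.C c₁ * Ppoly b c b₀ c₁ 0
    simp only [Ppoly]; ring
  · intro n
    show Polynomial.X * Ppoly b c b₀ c₁ (n+2)
      = Ppoly b c b₀ c₁ (n+3) + Polynomial.C b * Ppoly b c b₀ c₁ (n+2)
        + Polynomial.C c * Ppoly b c b₀ c₁ (n+1)
    rw [Ppoly]; ring
  · show φ (Ppoly b c b₀ c₁ 0) = 1
    have := φX 0
    simpa [Ppoly, hg0] using this
  · intro n
    have h := (key n).2 0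
    rw [pow_zero, one_mul] at h
    rw [h]
    show PowerSeries.coeff 0 (Aser c c₁ F G (n+1)) = 0
    simp [Aser, PowerSeries.coeff_zero_eq_constantCoeff]
  · intro n
    exact (φX n).symm
end
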